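/- (Diffusion amplification for bounded PDP.) Let F(D, ⊥, {p_i}) be the diffusion operator on datasets of size n, which independently keeps each element x_i with probability p_i and replaces it with the placeholder ⊥ with probability 1−p_i. If a mechanism M satisfies ε-DP under the change-one neighboring relation, then the composite mechanism M∘F satisfies (ε₁,…,ε_n)-PDP under the change-one relation, where e^{ε_i} = 1 + p_i(e^ε − 1), i.e., for datasets D, D' differing only in the i-th coordinate and all measurable K, Pr(M(F(D)) ∈ K) ≤ (1 + p_i(e^ε − 1)) · Pr(M(F(D')) ∈ K). -/

import Mathlib

open MeasureTheory

section Aux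
variable {n : ℕ} {X : Type*} [MeasurableSpace X]

/-- Decompose a product measure whose `i`-th factor is a mixture. -/
lemma pi_update_mix (μ : Fin n → Measure X) [∀ j, IsProbabilityMeasure (μ j)]
    (i : Fin n) (c c' : ENNReal) (ρ σ : Measure X)
    [IsProbabilityMeasure ρ] [IsProbabilityMeasure σ]
    (h : μ i = c • ρ + c' • σ) :
    Measure.pi μ = c • Measure.pi (Function.update μ i ρ)
      + c' • Measure.pi (Function.update μ i σ) := by
  haveI h1 : ∀ j, IsProbabilityMeasure (Function.update μ i ρ j) := by
    intro j
    rcases eq_or_ne j i with hj | hj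
    · subst hj; rw [Function.update_self]; infer_instance
    · rw [Function.update_of_ne hj]; infer_instance
  haveI h2 : ∀ j, IsProbabilityMeasure (Function.update μ i σ j) := by
    intro j
    rcases eq_or_ne j i with hj | hj
    · subst hj; rw [Function.update_self]; infer_instance
    · rw [Function.update_of_ne hj]; infer_instance
  refine Measure.pi_eq fun s hs => ?_
  rw [Measure.add_apply, Measure.smul_apply, Measure.smul_apply,
    Measure.pi_pi, Measure.pi_pi, smul_eq_mul, smul_eq_mul]
  rw [Finset.prod_eq_mul_prod_sdiff_singleton_of_mem (Finset.mem_univ i)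
      (fun j => μ j (s j)),
    Finset.prod_eq_mul_prod_sdiff_singleton_of_mem (Finset.mem_univ i)
      (fun j => Function.update μ i ρ j (s j)),
    Finset.prod_eq_mul_prod_sdiff_singleton_of_mem (Finset.mem_univ i)
      (fun j => Function.update μ i σ j (s j))]
  have hrest1 : ∏ j ∈ Finset.univ \ {i}, Function.update μ i ρ j (s j)
      = ∏ j ∈ Finset.univ \ {i}, μ j (s j) := by
    refine Finset.prod_congr rfl fun j hj => ?_
    rw [Function.update_of_ne (by simpa using (Finset.mem_sdiff.mp hj).2)]
  have hrest2 : ∏ j ∈ Finset.univ \ {i}, Function.update μ i σ j (s j)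
      = ∏ j ∈ Finset.univ \ {i}, μ j (s j) := by
    refine Finset.prod_congr rfl fun j hj => ?_
    rw [Function.update_of_ne (by simpa using (Finset.mem_sdiff.mp hj).2)]
  rw [hrest1, hrest2, Function.update_self, Function.update_self, h,
    Measure.add_apply, Measure.smul_apply, Measure.smul_apply,
    smul_eq_mul, smul_eq_mul, add_mul, mul_assoc, mul_assoc]

/-- A product measure with a Dirac factor is a pushforward of the full product. -/
lemma pi_update_dirac (μ : Fin n → Measure X) [∀ j, IsProbabilityMeasure (μ j)]
    (i : Fin n) (x : X) :
    Measure.pi (Function.update μ i (Measure.dirac x))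
      = Measure.map (fun A => Function.update A i x) (Measure.pi μ) := by
  haveI h1 : ∀ j, IsProbabilityMeasure (Function.update μ i (Measure.dirac x) j) := by
    intro j
    rcases eq_or_ne j i with hj | hj
    · subst hj; rw [Function.update_self]; infer_instance
    · rw [Function.update_of_ne hj]; infer_instance
  refine Measure.pi_eq fun s hs => ?_
  rw [Measure.map_apply measurable_update_left (MeasurableSet.univ_pi hs)]
  rw [Finset.prod_eq_mul_prod_sdiff_singleton_of_mem (Finset.mem_univ i)
      (fun j => Function.update μ i (Measure.dirac x) j (s j)),
    Function.update_self]
  have hrest : ∏ j ∈ Finset.univ \ {i}, Function.update μ i (Measure.dirac x) j (s j)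
      = ∏ j ∈ Finset.univ \ {i}, μ j (s j) := by
    refine Finset.prod_congr rfl fun j hj => ?_
    rw [Function.update_of_ne (by simpa using (Finset.mem_sdiff.mp hj).2)]
  rw [hrest]
  by_cases hx : x ∈ s i
  · have hpre : (fun A : Fin n → X => Function.update A i x) ⁻¹' Set.univ.pi s
        = Set.univ.pi (Function.update s i Set.univ) := by
      ext A
      simp only [Set.mem_preimage, Set.mem_univ_pi]
      constructor
      · intro h j
        rcases eq_or_ne j i with hj | hj
        · subst hj; simp [Function.update_self]
        · have := h j
          rwa [Function.update_of_ne hj] at this ⊢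
      · intro h j
        rcases eq_or_ne j i with hj | hj
        · subst hj; simpa [Function.update_self] using hx
        · have := h j
          rwa [Function.update_of_ne hj] at this ⊢
    rw [hpre, Measure.pi_pi, Measure.dirac_apply_of_mem hx, one_mul]
    rw [Finset.prod_eq_mul_prod_sdiff_singleton_of_mem (Finset.mem_univ i)
        (fun j => μ j (Function.update s i Set.univ j)), Function.update_self,
      measure_univ, one_mul]
    refine Finset.prod_congr rfl fun j hj => ?_
    rw [Function.update_of_ne (by simpa using (Finset.mem_sdiff.mp hj).2)]
  · have hpre : (fun A : Fin n → X => Function.update A i x) ⁻¹' Set.univ.pi s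
        = (∅ : Set (Fin n → X)) := by
      ext A
      simp only [Set.mem_preimage, Set.mem_univ_pi, Set.mem_empty_iff_false, iff_false]
      intro h
      exact hx (by simpa [Function.update_self] using h i)
    rw [hpre, measure_empty, Measure.dirac_apply' _ (hs i),
      Set.indicator_of_notMem hx, zero_mul]

end Aux

/-- Diffusion amplification for bounded PDP: if `M` is `ε`-DP under the change-one
relation, and `F` is the diffusion that independently keeps `D i` with probability
`p i` and otherwise replaces it with the placeholder `bot`, then for datasets `D, D'`
differing only in coordinate `i`, the composite `M ∘ F` satisfies
`Pr(M(F(D)) ∈ K) ≤ (1 + p_i(e^ε − 1)) · Pr(M(F(D')) ∈ K)`. -/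
theorem diffusion_amplification {X 𝒴 : Type*} [MeasurableSpace X] [MeasurableSpace 𝒴]
    {n : ℕ} (bot : X) (p : Fin n → ℝ) (hp0 : ∀ i, 0 ≤ p i) (hp1 : ∀ i, p i ≤ 1)
    (ε : ℝ) (hε : 0 ≤ ε)
    (M : (Fin n → X) → Measure 𝒴) (hMmeas : Measurable M)
    (hMprob : ∀ A, IsProbabilityMeasure (M A))
    (hDP : ∀ A A' : Fin n → X, (∃ i₀, ∀ j, j ≠ i₀ → A j = A' j) →
      ∀ K : Set 𝒴, MeasurableSet K → M A K ≤ ENNReal.ofReal (Real.exp ε) * M A' K)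
    (F : (Fin n → X) → Measure (Fin n → X))
    (hF : ∀ D : Fin n → X, F D = Measure.pi fun i =>
      ENNReal.ofReal (p i) • Measure.dirac (D i) +
        ENNReal.ofReal (1 - p i) • Measure.dirac bot)
    (i : Fin n) (D D' : Fin n → X) (hDD' : ∀ j, j ≠ i → D j = D' j)
    (K : Set 𝒴) (hK : MeasurableSet K) :
    ((F D).bind M) K ≤
      ENNReal.ofReal (1 + p i * (Real.exp ε - 1)) * ((F D').bind M) K := by
  classical
  set c : ENNReal := ENNReal.ofReal (p i) with hc
  set c' : ENNReal := ENNReal.ofReal (1 - p i) with hc'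
  set E : ENNReal := ENNReal.ofReal (Real.exp ε) with hEdef
  set μ : Fin n → Measure X := fun j =>
    ENNReal.ofReal (p j) • Measure.dirac (D j) +
      ENNReal.ofReal (1 - p j) • Measure.dirac bot with hμ
  set μ' : Fin n → Measure X := fun j =>
    ENNReal.ofReal (p j) • Measure.dirac (D' j) +
      ENNReal.ofReal (1 - p j) • Measure.dirac bot with hμ'
  have hprobaux : ∀ (z : X) (j : Fin n), IsProbabilityMeasure
      (ENNReal.ofReal (p j) • Measure.dirac z +
        ENNReal.ofReal (1 - p j) • Measure.dirac bot) := by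
    intro z j
    constructor
    rw [Measure.add_apply, Measure.smul_apply, Measure.smul_apply, smul_eq_mul,
      smul_eq_mul, measure_univ, measure_univ, mul_one, mul_one,
      ← ENNReal.ofReal_add (hp0 j) (by linarith [hp1 j])]
    simp
  haveI hμprob : ∀ j, IsProbabilityMeasure (μ j) := fun j => hprobaux (D j) j
  haveI hμ'prob : ∀ j, IsProbabilityMeasure (μ' j) := fun j => hprobaux (D' j) j
  -- the updated families coincide
  have hupd : ∀ ρ : Measure X, Function.update μ i ρ = Function.update μ' i ρ := by
    intro ρ
    funext j
    rcases eq_or_ne j i with hj | hj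
    · subst hj; rw [Function.update_self, Function.update_self]
    · rw [Function.update_of_ne hj, Function.update_of_ne hj]
      simp only [hμ, hμ']
      rw [hDD' j hj]
  -- the value of the composite mechanism as a mixture
  have hg : Measurable fun A : Fin n → X => M A K :=
    (Measure.measurable_coe hK).comp hMmeas
  set G : X → ENNReal := fun x =>
    ∫⁻ A, M (Function.update A i x) K ∂(Measure.pi μ) with hG
  have hdecomp : ∀ (ν : Fin n → Measure X) (_ : ∀ j, IsProbabilityMeasure (ν j))
      (x : X), (∀ ρ : Measure X, Function.update ν i ρ = Function.update μ i ρ) →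
      ν i = c • Measure.dirac x + c' • Measure.dirac bot →
      (Measure.pi ν).bind M K = c * G x + c' * G bot := by
    intro ν hν x hupdν hνi
    haveI := hν
    rw [Measure.bind_apply hK hMmeas.aemeasurable,
      @pi_update_mix n X _ ν hν i c c' (Measure.dirac x) (Measure.dirac bot) inferInstance inferInstance hνi,
      lintegral_add_measure, lintegral_smul_measure, lintegral_smul_measure,
      hupdν, hupdν, @pi_update_dirac n X _ μ hμprob i x, @pi_update_dirac n X _ μ hμprob i bot,
      lintegral_map hg measurable_update_left,
      lintegral_map hg measurable_update_left, smul_eq_mul, smul_eq_mul]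
  have hD : (F D).bind M K = c * G (D i) + c' * G bot := by
    rw [hF D]
    exact hdecomp μ hμprob (D i) (fun ρ => rfl) rfl
  have hD' : (F D').bind M K = c * G (D' i) + c' * G bot := by
    rw [hF D']
    exact hdecomp μ' hμ'prob (D' i) (fun ρ => (hupd ρ).symm) rfl
  -- DP comparison pointwise, then integrated
  have hGle : ∀ x y : X, G x ≤ E * G y := by
    intro x y
    rw [hG]
    calc ∫⁻ A, M (Function.update A i x) K ∂(Measure.pi μ)
        ≤ ∫⁻ A, E * M (Function.update A i y) K ∂(Measure.pi μ) := by
          refine lintegral_mono fun A => ?_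
          refine hDP _ _ ⟨i, fun j hj => ?_⟩ K hK
          rw [Function.update_of_ne hj, Function.update_of_ne hj]
      _ = E * ∫⁻ A, M (Function.update A i y) K ∂(Measure.pi μ) :=
          lintegral_const_mul' _ _ ENNReal.ofReal_ne_top
  have hE1 : 1 ≤ E := by
    rw [hEdef, ← ENNReal.ofReal_one]
    exact ENNReal.ofReal_le_ofReal (Real.one_le_exp hε)
  have hcc' : c + c' = 1 := by
    rw [hc, hc', ← ENNReal.ofReal_add (hp0 i) (by linarith [hp1 i])]
    simp
  -- rewrite the constant
  have hconst : ENNReal.ofReal (1 + p i * (Real.exp ε - 1)) = 1 + c * (E - 1) := by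
    have h1 : (0:ℝ) ≤ Real.exp ε - 1 := by linarith [Real.one_le_exp hε]
    rw [ENNReal.ofReal_add (by norm_num) (mul_nonneg (hp0 i) h1),
      ENNReal.ofReal_one, ENNReal.ofReal_mul (hp0 i), hc, hEdef]
    congr 1
    congr 1
    rw [← ENNReal.ofReal_one, ENNReal.ofReal_sub _ (by norm_num)]
  -- final arithmetic
  rw [hD, hD', hconst]
  set a : ENNReal := G (D i)
  set a' : ENNReal := G (D' i)
  set b : ENNReal := G bot
  set m : ENNReal := min a' b with hm
  have ham : a ≤ E * m := by
    rcases min_cases a' b with ⟨h1, _⟩ | ⟨h1, _⟩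
    · rw [hm, h1]; exact hGle (D i) (D' i)
    · rw [hm, h1]; exact hGle (D i) bot
  have hEm : E * m = m + (E - 1) * m := by
    conv_lhs => rw [← add_tsub_cancel_of_le hE1]
    rw [add_mul, one_mul]
  have hmle : m ≤ c * a' + c' * b := by
    calc m = (c + c') * m := by rw [hcc', one_mul]
      _ = c * m + c' * m := add_mul _ _ _
      _ ≤ c * a' + c' * b :=
          add_le_add (mul_le_mul_right (min_le_left _ _) c)
            (mul_le_mul_right (min_le_right _ _) c')
  calc c * a + c' * b ≤ c * (E * m) + c' * b :=
        add_le_add_left (mul_le_mul_right ham c) _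
    _ = c * m + c * ((E - 1) * m) + c' * b := by rw [hEm, mul_add]
    _ ≤ c * a' + c * ((E - 1) * (c * a' + c' * b)) + c' * b :=
        add_le_add_left (add_le_add (mul_le_mul_right (min_le_left _ _) c)
          (mul_le_mul_right (mul_le_mul_right hmle _) c)) _
    _ = (1 + c * (E - 1)) * (c * a' + c' * b) := by ring
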